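/- Let W₂ be the set of pairs (u,v) ∈ M not top-reducible by G with val(v) minimal equal to ν and LM(u) minimal among such pairs. Then any two elements (u_1,v_1), (u_2,v_2) of W₂ satisfy LM(v_1) = LM(v_2). -/

import Mathlib

open MvPowerSeries

namespace TateStmt

variable {n : ℕ} {O : Type*} [CommRing O]

/-- The Tate condition: the (π-adic) valuations of the coefficients tend to infinity. -/
def IsTate (π : O) (f : MvPowerSeries (Fin n) O) : Prop :=
  ∀ N : ℕ, {i : Fin n →₀ ℕ | ¬ π ^ N ∣ MvPowerSeries.coeff i f}.Finite

/-- The integral Tate algebra `K{X}°`, as a subring of the ring of formal power series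
over the valuation ring `O = K°`. -/
def TateAlgebra (n : ℕ) (O : Type*) [CommRing O] (π : O) :
    Subring (MvPowerSeries (Fin n) O) where
  carrier := {f | IsTate π f}
  zero_mem' := by
    intro N
    apply Set.Finite.subset (Set.finite_empty)
    intro i hi
    exact hi (Dvd.intro 0 (by simp))
  one_mem' := by
    intro N
    apply Set.Finite.subset (Set.finite_singleton (0 : Fin n →₀ ℕ))
    intro i hi
    by_contra h
    rw [Set.mem_singleton_iff] at h
    apply hi
    rw [MvPowerSeries.coeff_one, if_neg h]
    exact Dvd.intro 0 (by simp)
  add_mem' := by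
    intro f g hf hg N
    apply Set.Finite.subset ((hf N).union (hg N))
    intro i hi
    by_contra h
    simp only [Set.mem_union, Set.mem_setOf_eq, not_or, not_not] at h
    exact hi (by rw [map_add]; exact dvd_add h.1 h.2)
  neg_mem' := by
    intro f hf N
    apply Set.Finite.subset (hf N)
    intro i hi
    by_contra h
    simp only [Set.mem_setOf_eq, not_not] at h
    exact hi (by rw [map_neg]; exact (dvd_neg).mpr h)
  mul_mem' := by
    intro f g hf hg N
    apply Set.Finite.subset (Set.Finite.add (hf N) (hg N))
    intro i hi
    by_contra h
    apply hi
    rw [MvPowerSeries.coeff_mul]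
    apply Finset.dvd_sum
    intro p hp
    rw [Finset.HasAntidiagonal.mem_antidiagonal] at hp
    by_cases h1 : π ^ N ∣ MvPowerSeries.coeff p.1 f
    · exact Dvd.dvd.mul_right h1 _
    · by_cases h2 : π ^ N ∣ MvPowerSeries.coeff p.2 g
      · exact Dvd.dvd.mul_left h2 _
      · exact absurd (hp ▸ Set.add_mem_add h1 h2) h

/-- Tate monomials `π^a X^i`, identified with pairs `(a, i) ∈ ℕ × ℕ^n`. -/
abbrev TMon (n : ℕ) := ℕ × (Fin n →₀ ℕ)

noncomputable def monMul (a b : TMon n) : TMon n := (a.1 + b.1, a.2 + b.2)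
def monDvd (a b : TMon n) : Prop := a.1 ≤ b.1 ∧ a.2 ≤ b.2
noncomputable def monDiv (a b : TMon n) : TMon n := (a.1 - b.1, a.2 - b.2)
noncomputable def monLcm (a b : TMon n) : TMon n := (max a.1 b.1, a.2 ⊔ b.2)

/-- The valuation-first term order: compare valuations first (a *smaller* valuation gives a
*larger* term), then exponents via the monomial order `mo`. -/
def termLT (mo : MonomialOrder (Fin n)) (a b : TMon n) : Prop :=
  b.1 < a.1 ∨ (a.1 = b.1 ∧ mo.toSyn a.2 < mo.toSyn b.2)

def termLE (mo : MonomialOrder (Fin n)) (a b : TMon n) : Prop :=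
  a = b ∨ termLT mo a b

/-- Order on `Option (TMon n)`, where `none` (the "monomial" of `0`) is smallest. -/
def optLT (mo : MonomialOrder (Fin n)) : Option (TMon n) → Option (TMon n) → Prop
  | none, none => False
  | none, some _ => True
  | some _, none => False
  | some a, some b => termLT mo a b

def optLE (mo : MonomialOrder (Fin n)) (a b : Option (TMon n)) : Prop :=
  a = b ∨ optLT mo a b

noncomputable def optMul (t : TMon n) : Option (TMon n) → Option (TMon n)
  | none => none
  | some a => some (monMul t a)

/-- `(a, i)` is (the monomial of) a term of `f`: the coefficient of `X^i` has valuation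
exactly `a`. -/
def IsTerm (π : O) (f : MvPowerSeries (Fin n) O) (m : TMon n) : Prop :=
  π ^ m.1 ∣ MvPowerSeries.coeff m.2 f ∧ ¬ π ^ (m.1 + 1) ∣ MvPowerSeries.coeff m.2 f

/-- `m` is the leading monomial of `f`. -/
def IsLM (π : O) (mo : MonomialOrder (Fin n)) (f : MvPowerSeries (Fin n) O) (m : TMon n) :
    Prop :=
  IsTerm π f m ∧ ∀ m', IsTerm π f m' → termLE mo m' m

/-- `s` is the leading monomial of `f`, with the convention `LM 0 = none`. -/
def IsLMopt (π : O) (mo : MonomialOrder (Fin n)) (f : MvPowerSeries (Fin n) O) :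
    Option (TMon n) → Prop
  | none => f = 0
  | some m => IsLM π mo f m

/-- All coefficients of `f` are divisible by `π^N`, i.e. `val f ≥ N`. -/
def DvdAll (π : O) (N : ℕ) (f : MvPowerSeries (Fin n) O) : Prop :=
  ∀ i, π ^ N ∣ MvPowerSeries.coeff i f

/-- The Gauss valuation of `f` is exactly `N`. -/
def ValEq (π : O) (f : MvPowerSeries (Fin n) O) (N : ℕ) : Prop :=
  DvdAll π N f ∧ ¬ DvdAll π (N + 1) f

/-- `G` is a Gröbner basis of the ideal `I` of the (integral) Tate algebra. -/
def IsGB (π : O) (mo : MonomialOrder (Fin n)) (G : Set (TateAlgebra n O π))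
    (I : Ideal (TateAlgebra n O π)) : Prop :=
  (∀ g ∈ G, g ∈ I) ∧
    ∀ f ∈ I, (f : MvPowerSeries (Fin n) O) ≠ 0 → ∀ mf,
      IsLM π mo (f : MvPowerSeries (Fin n) O) mf →
        ∃ g ∈ G, ∃ mg, IsLM π mo (g : MvPowerSeries (Fin n) O) mg ∧ monDvd mg mf

/-- The module `M = {(u,v) : u f - v ∈ I₀}`. -/
def SigMod {π : O} (I0 : Ideal (TateAlgebra n O π)) (f : TateAlgebra n O π) :
    Set (TateAlgebra n O π × TateAlgebra n O π) :=
  {p | p.1 * f - p.2 ∈ I0}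

/-- `p = (u₁,v₁)` is top-reducible by `q = (u₂,v₂)`. -/
def TopRed (π : O) (mo : MonomialOrder (Fin n))
    (p q : TateAlgebra n O π × TateAlgebra n O π) : Prop :=
  (q.2 = 0 ∧ ∃ mu mq, IsLM π mo (p.1 : MvPowerSeries (Fin n) O) mu ∧
      IsLM π mo (q.1 : MvPowerSeries (Fin n) O) mq ∧ monDvd mq mu)
  ∨ (p.2 ≠ 0 ∧ q.2 ≠ 0 ∧
      ∃ m1 m2, IsLM π mo (p.2 : MvPowerSeries (Fin n) O) m1 ∧
        IsLM π mo (q.2 : MvPowerSeries (Fin n) O) m2 ∧ monDvd m2 m1 ∧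
        ∃ s1 s2, IsLMopt π mo (p.1 : MvPowerSeries (Fin n) O) s1 ∧
          IsLMopt π mo (q.1 : MvPowerSeries (Fin n) O) s2 ∧
          optLE mo (optMul (monDiv m1 m2) s2) s1)

/-- `G` is a strong Gröbner basis of the module `M = SigMod I0 f`. -/
def IsSGB (π : O) (mo : MonomialOrder (Fin n)) (I0 : Ideal (TateAlgebra n O π))
    (f : TateAlgebra n O π) (G : Set (TateAlgebra n O π × TateAlgebra n O π)) : Prop :=
  G.Finite ∧ G ⊆ SigMod I0 f ∧
    ∀ p ∈ SigMod I0 f, p ≠ 0 → ∃ q ∈ G, TopRed π mo p q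

/-- `p` is covered by `q`. -/
def Covers (π : O) (mo : MonomialOrder (Fin n))
    (q p : TateAlgebra n O π × TateAlgebra n O π) : Prop :=
  ∃ mu mq, IsLM π mo (p.1 : MvPowerSeries (Fin n) O) mu ∧
    IsLM π mo (q.1 : MvPowerSeries (Fin n) O) mq ∧ monDvd mq mu ∧
    ∃ sv sp, IsLMopt π mo (q.2 : MvPowerSeries (Fin n) O) sv ∧
      IsLMopt π mo (p.2 : MvPowerSeries (Fin n) O) sp ∧
      optLT mo (optMul (monDiv mu mq) sv) sp

def CoveredBy (π : O) (mo : MonomialOrder (Fin n))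
    (p : TateAlgebra n O π × TateAlgebra n O π)
    (G : Set (TateAlgebra n O π × TateAlgebra n O π)) : Prop :=
  ∃ q ∈ G, Covers π mo q p

/-- The Tate series `π^a X^i`, as an element of the Tate algebra. -/
noncomputable def monTA (π : O) (m : TMon n) : TateAlgebra n O π :=
  ⟨MvPowerSeries.monomial m.2 (π ^ m.1), by
    intro N
    apply Set.Finite.subset (Set.finite_singleton m.2)
    intro i hi
    by_contra h
    rw [Set.mem_singleton_iff] at h
    apply hi
    rw [MvPowerSeries.coeff_monomial, if_neg h]
    exact Dvd.intro 0 (by simp)⟩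

noncomputable def smulPair (π : O) (m : TMon n) (p : TateAlgebra n O π × TateAlgebra n O π) :
    TateAlgebra n O π × TateAlgebra n O π :=
  (monTA π m * p.1, monTA π m * p.2)

/-- `r` is the J-pair of `(p, q)` (with `p` carrying the larger signature part). -/
def IsJPair (π : O) (mo : MonomialOrder (Fin n))
    (p q r : TateAlgebra n O π × TateAlgebra n O π) : Prop :=
  ∃ m1 m2, IsLM π mo (p.2 : MvPowerSeries (Fin n) O) m1 ∧
    IsLM π mo (q.2 : MvPowerSeries (Fin n) O) m2 ∧
    (∃ s1 s2, IsLMopt π mo (p.1 : MvPowerSeries (Fin n) O) s1 ∧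
      IsLMopt π mo (q.1 : MvPowerSeries (Fin n) O) s2 ∧
      optLT mo (optMul (monDiv (monLcm m1 m2) m2) s2)
        (optMul (monDiv (monLcm m1 m2) m1) s1)) ∧
    r = smulPair π (monDiv (monLcm m1 m2) m1) p

section Residue

variable {k : Type*} [Field k]

/-- `P = ρ(f)`, the reduction mod `π` of `π^{-val f} f`. -/
def IsRho (π : O) (φ : O →+* k) (f : MvPowerSeries (Fin n) O)
    (P : MvPolynomial (Fin n) k) : Prop :=
  ∃ (N : ℕ) (g : MvPowerSeries (Fin n) O), f = (π ^ N) • g ∧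
    (∃ i, ¬ π ∣ MvPowerSeries.coeff i g) ∧
    ∀ i, MvPolynomial.coeff i P = φ (MvPowerSeries.coeff i g)

def rhoSet (π : O) (φ : O →+* k) (S : Set (TateAlgebra n O π)) :
    Set (MvPolynomial (Fin n) k) :=
  {P | ∃ f ∈ S, IsRho π φ (f : MvPowerSeries (Fin n) O) P}

/-- `Ī_N`: the image in `k[X]` of `π^{-N} (I ∩ π^N K{X}°)`. -/
def BarIdeal (π : O) (φ : O →+* k) (I : Ideal (TateAlgebra n O π)) (N : ℕ) :
    Set (MvPolynomial (Fin n) k) :=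
  {P | ∃ f ∈ I, ∃ g : MvPowerSeries (Fin n) O, (f : MvPowerSeries (Fin n) O) = (π ^ N) • g ∧
    ∀ i, MvPolynomial.coeff i P = φ (MvPowerSeries.coeff i g)}

/-- `d` is the leading exponent of the polynomial `P` for the monomial order `mo`. -/
def IsPolyLM (mo : MonomialOrder (Fin n)) (P : MvPolynomial (Fin n) k)
    (d : Fin n →₀ ℕ) : Prop :=
  MvPolynomial.coeff d P ≠ 0 ∧ ∀ e, MvPolynomial.coeff e P ≠ 0 → mo.toSyn e ≤ mo.toSyn d

/-- `G` is a Gröbner basis of the set (ideal) `J` of polynomials over the residue field. -/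
def IsPolyGB (mo : MonomialOrder (Fin n)) (G : Set (MvPolynomial (Fin n) k))
    (J : Set (MvPolynomial (Fin n) k)) : Prop :=
  G ⊆ J ∧ ∀ P ∈ J, P ≠ 0 → ∀ d, IsPolyLM mo P d →
    ∃ Q ∈ G, ∃ e, IsPolyLM mo Q e ∧ e ≤ d

end Residue

end TateStmt


open TateStmt MvPowerSeries

variable {n : ℕ} {O : Type*} [CommRing O] [IsDomain O] [IsDiscreteValuationRing O]

/-- The set `W` of nonzero pairs of `M = {(u,v) : u f - v ∈ I₀}` that are top-reducible by
no element of `G`. -/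
def WSet (π : O) (mo : MonomialOrder (Fin n)) (I0 : Ideal (TateAlgebra n O π))
    (f : TateAlgebra n O π) (G : Set (TateAlgebra n O π × TateAlgebra n O π)) :
    Set (TateAlgebra n O π × TateAlgebra n O π) :=
  {p | p ∈ SigMod I0 f ∧ p ≠ 0 ∧ ∀ q ∈ G, ¬ TopRed π mo p q}

/-- `W₁`: elements of `W` whose `v`-part has leading monomial of valuation `ν`. -/
def W1Set (π : O) (mo : MonomialOrder (Fin n)) (I0 : Ideal (TateAlgebra n O π))
    (f : TateAlgebra n O π) (G : Set (TateAlgebra n O π × TateAlgebra n O π)) (ν : ℕ) :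
    Set (TateAlgebra n O π × TateAlgebra n O π) :=
  {p ∈ WSet π mo I0 f G | ∃ mv, IsLM π mo (p.2 : MvPowerSeries (Fin n) O) mv ∧ mv.1 = ν}

/-- `W₂`: elements of `W₁` whose `u`-part has minimal leading monomial. -/
def W2Set (π : O) (mo : MonomialOrder (Fin n)) (I0 : Ideal (TateAlgebra n O π))
    (f : TateAlgebra n O π) (G : Set (TateAlgebra n O π × TateAlgebra n O π)) (ν : ℕ) :
    Set (TateAlgebra n O π × TateAlgebra n O π) :=
  {p ∈ W1Set π mo I0 f G ν | ∃ s, IsLMopt π mo (p.1 : MvPowerSeries (Fin n) O) s ∧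
    ∀ q ∈ W1Set π mo I0 f G ν, ∀ s',
      IsLMopt π mo (q.1 : MvPowerSeries (Fin n) O) s' → optLE mo s s'}

section Aux

open TateStmt MvPowerSeries

variable {π : O} {mo : MonomialOrder (Fin n)}

/-! ### Order lemmas -/

lemma termLT_irrefl (a : TMon n) : ¬ termLT mo a a := by
  rintro (h | ⟨-, h⟩) <;> exact lt_irrefl _ h

lemma termLT_trans {a b c : TMon n} (h1 : termLT mo a b) (h2 : termLT mo b c) :
    termLT mo a c := by
  rcases h1 with h1 | ⟨h1, h1'⟩ <;> rcases h2 with h2 | ⟨h2, h2'⟩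
  · exact Or.inl (h2.trans h1)
  · exact Or.inl (h2 ▸ h1)
  · exact Or.inl (h1 ▸ h2)
  · exact Or.inr ⟨h1.trans h2, h1'.trans h2'⟩

lemma termLT_asymm {a b : TMon n} (h1 : termLT mo a b) (h2 : termLT mo b a) : False :=
  termLT_irrefl a (termLT_trans h1 h2)

lemma termLT_of_ne {a b : TMon n} (h : a ≠ b) : termLT mo a b ∨ termLT mo b a := by
  rcases lt_trichotomy a.1 b.1 with h1 | h1 | h1
  · exact Or.inr (Or.inl h1)
  · rcases lt_trichotomy (mo.toSyn a.2) (mo.toSyn b.2) with h2 | h2 | h2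
    · exact Or.inl (Or.inr ⟨h1, h2⟩)
    · exact absurd (Prod.ext h1 (mo.toSyn.injective h2)) h
    · exact Or.inr (Or.inr ⟨h1.symm, h2⟩)
  · exact Or.inl (Or.inl h1)

lemma termLE_antisymm {a b : TMon n} (h1 : termLE mo a b) (h2 : termLE mo b a) : a = b := by
  rcases h1 with h1 | h1
  · exact h1
  rcases h2 with h2 | h2
  · exact h2.symm
  · exact absurd h1 (fun h => termLT_asymm h h2)

lemma optLE_step {X : Option (TMon n)} {m m' : TMon n} (h : optLE mo X (some m))
    (h2 : termLT mo m m') : optLE mo X (some m') := by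
  refine Or.inr ?_
  match X, h with
  | none, _ => trivial
  | some y, Or.inl hy =>
      simp only [Option.some.injEq] at hy
      exact hy ▸ h2
  | some y, Or.inr hy => exact termLT_trans hy h2

lemma optLE_antisymm {a b : Option (TMon n)} (h1 : optLE mo a b) (h2 : optLE mo b a) :
    a = b := by
  rcases h1 with h1 | h1
  · exact h1
  rcases h2 with h2 | h2
  · exact h2.symm
  match a, b, h1, h2 with
  | none, some _, _, h2 => exact absurd h2 not_false
  | some x, some y, h1, h2 => exact absurd (termLT_trans h1 h2) (termLT_irrefl x)

/-! ### Divisibility lemmas -/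

lemma exists_exact {c : O} {N : ℕ} (h : ¬ π ^ N ∣ c) :
    ∃ a, a < N ∧ π ^ a ∣ c ∧ ¬ π ^ (a + 1) ∣ c := by
  have hN : N ≠ 0 := by rintro rfl; simp at h
  have he1 : N - 1 + 1 = N := by omega
  have hex : ∃ a, ¬ π ^ (a + 1) ∣ c := ⟨N - 1, by rwa [he1]⟩
  classical
  refine ⟨Nat.find hex, ?_, ?_, Nat.find_spec hex⟩
  · have := Nat.find_min' hex (by rwa [he1])
    omega
  · rcases Nat.eq_zero_or_pos (Nat.find hex) with h0 | h0
    · simpa [h0] using (one_dvd c)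
    · have := Nat.find_min hex (show Nat.find hex - 1 < Nat.find hex by omega)
      rw [not_not] at this
      have he : Nat.find hex - 1 + 1 = Nat.find hex := by omega
      rwa [he] at this

lemma exact_decomp {a : ℕ} {x : O} (h1 : π ^ a ∣ x) (h2 : ¬ π ^ (a + 1) ∣ x) :
    ∃ α, x = π ^ a * α ∧ ¬ π ∣ α := by
  obtain ⟨α, hα⟩ := h1
  refine ⟨α, hα, fun ⟨t, ht⟩ => h2 ⟨t, by rw [hα, ht, pow_succ]; ring⟩⟩

lemma isUnit_of_not_dvd (hπ : Irreducible π) {x : O} (h : ¬ π ∣ x) : IsUnit x := by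
  by_contra hu
  exact h (by
    have hx : x ∈ IsLocalRing.maximalIdeal O := hu
    rwa [hπ.maximalIdeal_eq, Ideal.mem_span_singleton] at hx)

/-! ### Leading monomial lemmas -/

lemma TateStmt.IsTerm.ne_zero {F : MvPowerSeries (Fin n) O} {m : TMon n} (h : IsTerm π F m) :
    F ≠ 0 := by
  intro h0
  exact h.2 (by rw [h0, map_zero]; exact dvd_zero _)

lemma TateStmt.IsLM.coeff_dvd {F : MvPowerSeries (Fin n) O} {m : TMon n} (h : IsLM π mo F m)
    (i : Fin n →₀ ℕ) : π ^ m.1 ∣ MvPowerSeries.coeff i F := by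
  by_contra hc
  obtain ⟨a, ha, h1, h2⟩ := exists_exact hc
  rcases h.2 (a, i) ⟨h1, h2⟩ with he | hlt | ⟨he, -⟩
  · exact absurd (congrArg Prod.fst he) (by simpa using ha.ne)
  · exact absurd hlt (by omega)
  · exact absurd he (by simpa using ha.ne)

lemma TateStmt.IsLM.coeff_dvd_succ {F : MvPowerSeries (Fin n) O} {m : TMon n} (h : IsLM π mo F m)
    {i : Fin n →₀ ℕ} (hi : mo.toSyn m.2 < mo.toSyn i) :
    π ^ (m.1 + 1) ∣ MvPowerSeries.coeff i F := by
  by_contra hc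
  obtain ⟨a, ha, h1, h2⟩ := exists_exact hc
  rcases h.2 (a, i) ⟨h1, h2⟩ with he | hlt | ⟨he, hlt⟩
  · subst he; exact lt_irrefl _ hi
  · exact absurd hlt (by omega)
  · exact absurd hlt (not_lt.mpr hi.le)

lemma isLM_of_coeffs {F : MvPowerSeries (Fin n) O} {m : TMon n}
    (h2 : ¬ π ^ (m.1 + 1) ∣ MvPowerSeries.coeff m.2 F)
    (h3 : ∀ i, π ^ m.1 ∣ MvPowerSeries.coeff i F)
    (h4 : ∀ i, mo.toSyn m.2 < mo.toSyn i → π ^ (m.1 + 1) ∣ MvPowerSeries.coeff i F) :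
    IsLM π mo F m := by
  refine ⟨⟨h3 m.2, h2⟩, ?_⟩
  rintro ⟨a, i⟩ ⟨ht1, ht2⟩
  have ham : m.1 ≤ a := by
    by_contra hlt
    exact ht2 ((pow_dvd_pow π (by omega : a + 1 ≤ m.1)).trans (h3 i))
  rcases lt_trichotomy (mo.toSyn i) (mo.toSyn m.2) with hi | hi | hi
  · rcases Nat.eq_or_lt_of_le ham with he | hlt
    · exact Or.inr (Or.inr ⟨he.symm, hi⟩)
    · exact Or.inr (Or.inl hlt)
  · have : i = m.2 := mo.toSyn.injective hi
    rcases Nat.eq_or_lt_of_le ham with he | hlt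
    · exact Or.inl (Prod.ext he.symm this)
    · exact Or.inr (Or.inl hlt)
  · have : a ≠ m.1 := by
      rintro rfl
      exact ht2 (h4 i hi)
    exact Or.inr (Or.inl (by omega))

lemma isLM_unique {F : MvPowerSeries (Fin n) O} {m m' : TMon n} (h : IsLM π mo F m)
    (h' : IsLM π mo F m') : m = m' :=
  termLE_antisymm (h'.2 m h.1) (h.2 m' h'.1)

lemma lm_lt_of_all {F : MvPowerSeries (Fin n) O} {m ms : TMon n} (h : IsLM π mo F m)
    (hA : ∀ i, π ^ ms.1 ∣ MvPowerSeries.coeff i F)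
    (hB : ∀ i, mo.toSyn ms.2 ≤ mo.toSyn i → π ^ (ms.1 + 1) ∣ MvPowerSeries.coeff i F) :
    termLT mo m ms := by
  have h1 : ms.1 ≤ m.1 := by
    by_contra hlt
    exact h.1.2 ((pow_dvd_pow π (by omega : m.1 + 1 ≤ ms.1)).trans (hA m.2))
  rcases Nat.eq_or_lt_of_le h1 with he | hlt
  · refine Or.inr ⟨he.symm, ?_⟩
    by_contra hge
    exact h.1.2 (by rw [← he]; exact hB m.2 (not_lt.mp hge))
  · exact Or.inl hlt

lemma all_lt_mono {F : MvPowerSeries (Fin n) O} {m ms : TMon n} (h : termLT mo m ms)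
    (hA : ∀ i, π ^ m.1 ∣ MvPowerSeries.coeff i F)
    (hB : ∀ i, mo.toSyn m.2 ≤ mo.toSyn i → π ^ (m.1 + 1) ∣ MvPowerSeries.coeff i F) :
    (∀ i, π ^ ms.1 ∣ MvPowerSeries.coeff i F) ∧
      (∀ i, mo.toSyn ms.2 ≤ mo.toSyn i → π ^ (ms.1 + 1) ∣ MvPowerSeries.coeff i F) := by
  rcases h with h | ⟨h1, h2⟩
  · exact ⟨fun i => (pow_dvd_pow π h.le).trans (hA i),
      fun i _ => (pow_dvd_pow π h).trans (hA i)⟩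
  · exact ⟨fun i => h1 ▸ hA i,
      fun i hi => h1 ▸ hB i ((le_of_lt h2).trans hi)⟩

/-- Existence of a leading monomial for a nonzero Tate series. -/
lemma exists_isLM (hπ : Irreducible π) (F : TateAlgebra n O π)
    (hF : (F : MvPowerSeries (Fin n) O) ≠ 0) : ∃ m, IsLM π mo (F : MvPowerSeries (Fin n) O) m := by
  classical
  have hTate : IsTate π (F : MvPowerSeries (Fin n) O) := F.2
  obtain ⟨i0, hi0⟩ : ∃ i, MvPowerSeries.coeff i (F : MvPowerSeries (Fin n) O) ≠ 0 := by
    by_contra hc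
    push_neg at hc
    exact hF (MvPowerSeries.ext fun i => by rw [hc i, map_zero])
  obtain ⟨N, hu, hN⟩ := IsDiscreteValuationRing.eq_unit_mul_pow_irreducible hi0 hπ
  have hNd : ¬ π ^ (N + 1) ∣ MvPowerSeries.coeff i0 (F : MvPowerSeries (Fin n) O) := by
    rw [hN]
    rintro ⟨t, ht⟩
    have hπ0 : (π : O) ^ N ≠ 0 := pow_ne_zero _ hπ.ne_zero
    have hdvd : π ∣ (hu : O) := ⟨t, by
      apply mul_right_cancel₀ hπ0
      rw [ht, pow_succ]; ring⟩
    exact hπ.not_isUnit (isUnit_of_dvd_unit hdvd hu.isUnit)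
  have hex : ∃ a, ∃ i, ¬ π ^ (a + 1) ∣ MvPowerSeries.coeff i (F : MvPowerSeries (Fin n) O) :=
    ⟨N, i0, hNd⟩
  set a0 := Nat.find hex with ha0
  obtain ⟨i1, hi1⟩ := Nat.find_spec hex
  have hall : ∀ i, π ^ a0 ∣ MvPowerSeries.coeff i (F : MvPowerSeries (Fin n) O) := by
    intro i
    rcases Nat.eq_zero_or_pos a0 with h0 | h0
    · rw [h0, pow_zero]; exact one_dvd _
    · have := Nat.find_min hex (show a0 - 1 < a0 by omega)
      push_neg at this
      have he : a0 - 1 + 1 = a0 := by omega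
      exact he ▸ this i
  have hSfin : {i : Fin n →₀ ℕ |
      ¬ π ^ (a0 + 1) ∣ MvPowerSeries.coeff i (F : MvPowerSeries (Fin n) O)}.Finite :=
    hTate (a0 + 1)
  obtain ⟨istar, histar, hmax⟩ := Finset.exists_max_image hSfin.toFinset (fun i => mo.toSyn i)
    ⟨i1, hSfin.mem_toFinset.mpr hi1⟩
  rw [Set.Finite.mem_toFinset] at histar
  refine ⟨(a0, istar), isLM_of_coeffs histar hall ?_⟩
  intro i hi
  by_contra hc
  have : i ∈ hSfin.toFinset := hSfin.mem_toFinset.mpr hc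
  exact absurd (hmax i this) (not_le.mpr hi)

end Aux
section Aux2

open TateStmt MvPowerSeries

variable {π : O} {mo : MonomialOrder (Fin n)}

lemma monomial_mem (d : Fin n →₀ ℕ) (a : O) :
    MvPowerSeries.monomial d a ∈ TateAlgebra n O π := by
  intro N
  apply Set.Finite.subset (Set.finite_singleton d)
  intro i hi
  by_contra h
  rw [Set.mem_singleton_iff] at h
  apply hi
  rw [MvPowerSeries.coeff_monomial, if_neg h]
  exact dvd_zero _

example (π : O) (a b : TateAlgebra n O π) :
    ((a * b - a : TateAlgebra n O π) : MvPowerSeries (Fin n) O)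
      = (a : MvPowerSeries (Fin n) O) * b - a := rfl

lemma coe_ta_ne_zero {π : O} {F : TateAlgebra n O π} {m : TMon n}
    (h : IsLM π mo (F : MvPowerSeries (Fin n) O) m) : F ≠ 0 :=
  fun h0 => h.1.ne_zero (by rw [h0]; rfl)

lemma topRed_by_G0 {I0 : Ideal (TateAlgebra n O π)} {f : TateAlgebra n O π}
    {G : Set (TateAlgebra n O π × TateAlgebra n O π)}
    (hG0 : IsGB π mo {g : TateAlgebra n O π | ((0 : TateAlgebra n O π), g) ∈ G} I0)
    (p : TateAlgebra n O π × TateAlgebra n O π) (hp : p ∈ WSet π mo I0 f G)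
    {mv : TMon n} (hv : IsLM π mo (p.2 : MvPowerSeries (Fin n) O) mv)
    (s1 : Option (TMon n)) (hs1 : IsLMopt π mo (p.1 : MvPowerSeries (Fin n) O) s1)
    (gI : TateAlgebra n O π) (hgI : gI ∈ I0)
    (hgLM : IsLM π mo (gI : MvPowerSeries (Fin n) O) mv) :
    False := by
  have hne : (p.2 : MvPowerSeries (Fin n) O) ≠ 0 := hv.1.ne_zero
  obtain ⟨g', hg', mg, hLMg, hdvd⟩ := hG0.2 gI hgI hgLM.1.ne_zero mv hgLM
  apply hp.2.2 ((0 : TateAlgebra n O π), g') hg'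
  refine Or.inr ⟨fun h0 => hne (by rw [h0]; rfl),
    fun h0 => hLMg.1.ne_zero (by rw [show g' = 0 from h0]; rfl), mv, mg, hv, hLMg, hdvd, s1, none, hs1, rfl, ?_⟩
  show optLE mo none s1
  cases s1 with
  | none => exact Or.inl rfl
  | some _ => exact Or.inr trivial

end Aux2
section Aux3

open TateStmt MvPowerSeries

lemma aux_main (π : O) (hπ : Irreducible π) (mo : MonomialOrder (Fin n))
    (I0 : Ideal (TateAlgebra n O π)) (f : TateAlgebra n O π)
    (G : Set (TateAlgebra n O π × TateAlgebra n O π))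
    (hGM : G ⊆ SigMod I0 f)
    (hG0 : IsGB π mo {g : TateAlgebra n O π | ((0 : TateAlgebra n O π), g) ∈ G} I0)
    (ν : ℕ)
    (pA pB : TateAlgebra n O π × TateAlgebra n O π)
    (hA : pA ∈ SigMod I0 f) (hB : pB ∈ W2Set π mo I0 f G ν)
    (ms mA mB : TMon n)
    (huA : IsLM π mo (pA.1 : MvPowerSeries (Fin n) O) ms)
    (huB : IsLM π mo (pB.1 : MvPowerSeries (Fin n) O) ms)
    (hvA : IsLM π mo (pA.2 : MvPowerSeries (Fin n) O) mA)
    (hvB : IsLM π mo (pB.2 : MvPowerSeries (Fin n) O) mB)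
    (hmA : mA.1 = ν) (hmB : mB.1 = ν)
    (hlt : mo.toSyn mA.2 < mo.toSyn mB.2) : False := by
  classical
  obtain ⟨hB1, sB, hsB, hminB⟩ := hB
  obtain ⟨hBW, mv, hmv, hmvν⟩ := hB1
  have hpB1ne : (pB.1 : MvPowerSeries (Fin n) O) ≠ 0 := huB.1.ne_zero
  have hsBeq : sB = some ms := by
    cases sB with
    | none => exact absurd hsB hpB1ne
    | some m' => rw [isLM_unique hsB huB]
  rw [hsBeq] at hminB
  -- cancellation coefficient
  obtain ⟨α, hαeq, hαnd⟩ := exact_decomp huA.1.1 huA.1.2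
  obtain ⟨β, hβeq, hβnd⟩ := exact_decomp huB.1.1 huB.1.2
  have hβu : IsUnit β := isUnit_of_not_dvd hπ hβnd
  set c : O := α * ↑hβu.unit⁻¹ with hc
  have hcβ : c * β = α := by rw [hc, mul_assoc, IsUnit.val_inv_mul, mul_one]
  have hcu : IsUnit c := (isUnit_of_not_dvd hπ hαnd).mul hβu.unit⁻¹.isUnit
  set cT : TateAlgebra n O π := ⟨MvPowerSeries.monomial 0 c, monomial_mem 0 c⟩ with hcT
  have hcT_coeff : ∀ (g : TateAlgebra n O π) (i : Fin n →₀ ℕ),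
      MvPowerSeries.coeff i ((cT * g : TateAlgebra n O π) : MvPowerSeries (Fin n) O)
        = c * MvPowerSeries.coeff i (g : MvPowerSeries (Fin n) O) := by
    intro g i
    show MvPowerSeries.coeff i
      ((MvPowerSeries.monomial 0 c) * (g : MvPowerSeries (Fin n) O)) = _
    rw [MvPowerSeries.coeff_monomial_mul, if_pos (zero_le (a := i)), tsub_zero]
  set w2 : TateAlgebra n O π := pA.2 - cT * pB.2 with hw2def
  set w : TateAlgebra n O π := pA.1 - cT * pB.1 with hwdef
  have hw2coeff : ∀ i, MvPowerSeries.coeff i (w2 : MvPowerSeries (Fin n) O)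
      = MvPowerSeries.coeff i (pA.2 : MvPowerSeries (Fin n) O)
        - c * MvPowerSeries.coeff i (pB.2 : MvPowerSeries (Fin n) O) := by
    intro i
    rw [show (w2 : MvPowerSeries (Fin n) O)
      = (pA.2 : MvPowerSeries (Fin n) O) - ((cT * pB.2 : TateAlgebra n O π) :
        MvPowerSeries (Fin n) O) from rfl, map_sub, hcT_coeff]
  have hwcoeff : ∀ i, MvPowerSeries.coeff i (w : MvPowerSeries (Fin n) O)
      = MvPowerSeries.coeff i (pA.1 : MvPowerSeries (Fin n) O)
        - c * MvPowerSeries.coeff i (pB.1 : MvPowerSeries (Fin n) O) := by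
    intro i
    rw [show (w : MvPowerSeries (Fin n) O)
      = (pA.1 : MvPowerSeries (Fin n) O) - ((cT * pB.1 : TateAlgebra n O π) :
        MvPowerSeries (Fin n) O) from rfl, map_sub, hcT_coeff]
  -- LM of w2 is mB
  have hw2LM : IsLM π mo (w2 : MvPowerSeries (Fin n) O) mB := by
    refine isLM_of_coeffs ?_ ?_ ?_
    · rw [hw2coeff]
      intro hd
      have h1 : π ^ (mB.1 + 1) ∣ MvPowerSeries.coeff mB.2 (pA.2 : MvPowerSeries (Fin n) O) := by
        have := hvA.coeff_dvd_succ hlt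
        rwa [hmA, ← hmB] at this
      have h2 := dvd_sub h1 hd
      rw [sub_sub_cancel] at h2
      have h3 : π ^ (mB.1 + 1) ∣ MvPowerSeries.coeff mB.2 (pB.2 : MvPowerSeries (Fin n) O) := by
        have h4 := h2.mul_left (↑hcu.unit⁻¹ : O)
        rwa [← mul_assoc, IsUnit.val_inv_mul, one_mul] at h4
      exact hvB.1.2 h3
    · intro i
      rw [hw2coeff]
      refine dvd_sub ?_ ((hvB.coeff_dvd i).mul_left c)
      have := hvA.coeff_dvd i
      rwa [hmA, ← hmB] at this
    · intro i hi
      rw [hw2coeff]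
      refine dvd_sub ?_ (((hvB.coeff_dvd_succ hi)).mul_left c)
      have := hvA.coeff_dvd_succ (hlt.trans hi)
      rwa [hmA, ← hmB] at this
  -- all terms of w are < ms
  have hAllA : ∀ i, π ^ ms.1 ∣ MvPowerSeries.coeff i (w : MvPowerSeries (Fin n) O) := by
    intro i
    rw [hwcoeff]
    exact dvd_sub (huA.coeff_dvd i) ((huB.coeff_dvd i).mul_left c)
  have hAllB : ∀ i, mo.toSyn ms.2 ≤ mo.toSyn i →
      π ^ (ms.1 + 1) ∣ MvPowerSeries.coeff i (w : MvPowerSeries (Fin n) O) := by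
    intro i hi
    rw [hwcoeff]
    rcases eq_or_lt_of_le hi with he2 | hlt2
    · obtain rfl : ms.2 = i := mo.toSyn.injective he2
      have h0 : MvPowerSeries.coeff ms.2 (pA.1 : MvPowerSeries (Fin n) O)
          - c * MvPowerSeries.coeff ms.2 (pB.1 : MvPowerSeries (Fin n) O) = 0 := by
        rw [hαeq, hβeq, ← hcβ]; ring
      rw [h0]
      exact dvd_zero _
    · exact dvd_sub (huA.coeff_dvd_succ hlt2) ((huB.coeff_dvd_succ hlt2).mul_left c)
  have hwI : (w * f - w2 : TateAlgebra n O π) ∈ I0 := by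
    have he : w * f - w2 = (pA.1 * f - pA.2) - cT * (pB.1 * f - pB.2) := by
      rw [hwdef, hw2def]; ring
    rw [he]
    exact I0.sub_mem hA (I0.mul_mem_left _ hBW.1)
  -- the final contradiction when the u-part has valuation > ν
  have final : ∀ u : TateAlgebra n O π, ((u * f - w2 : TateAlgebra n O π) ∈ I0) →
      (∀ i, π ^ (ν + 1) ∣ MvPowerSeries.coeff i (u : MvPowerSeries (Fin n) O)) → False := by
    intro u hI hdvd
    have hprod : ∀ i, π ^ (ν + 1) ∣
        MvPowerSeries.coeff i ((u * f : TateAlgebra n O π) : MvPowerSeries (Fin n) O) := by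
      intro i
      show π ^ (ν + 1) ∣ MvPowerSeries.coeff i
        ((u : MvPowerSeries (Fin n) O) * (f : MvPowerSeries (Fin n) O))
      rw [MvPowerSeries.coeff_mul]
      exact Finset.dvd_sum (fun p _ => Dvd.dvd.mul_right (hdvd p.1) _)
    have hgI : (w2 - u * f : TateAlgebra n O π) ∈ I0 := by
      have h0 : (w2 - u * f : TateAlgebra n O π) = -(u * f - w2) := by ring
      rw [h0]
      exact I0.neg_mem hI
    have hgcoeff : ∀ i, MvPowerSeries.coeff i
        ((w2 - u * f : TateAlgebra n O π) : MvPowerSeries (Fin n) O)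
        = MvPowerSeries.coeff i (w2 : MvPowerSeries (Fin n) O)
          - MvPowerSeries.coeff i ((u * f : TateAlgebra n O π) : MvPowerSeries (Fin n) O) :=
      fun i => by
        rw [show ((w2 - u * f : TateAlgebra n O π) : MvPowerSeries (Fin n) O)
          = (w2 : MvPowerSeries (Fin n) O)
            - ((u * f : TateAlgebra n O π) : MvPowerSeries (Fin n) O) from rfl, map_sub]
    have hgLM : IsLM π mo ((w2 - u * f : TateAlgebra n O π) : MvPowerSeries (Fin n) O) mB := by
      refine isLM_of_coeffs ?_ ?_ ?_
      · rw [hgcoeff]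
        intro hd
        have h1 : π ^ (mB.1 + 1) ∣ MvPowerSeries.coeff mB.2
            ((u * f : TateAlgebra n O π) : MvPowerSeries (Fin n) O) := by
          rw [hmB]; exact hprod mB.2
        have h2 := dvd_add hd h1
        rw [sub_add_cancel] at h2
        exact hw2LM.1.2 h2
      · intro i
        rw [hgcoeff]
        exact dvd_sub (hw2LM.coeff_dvd i)
          ((pow_dvd_pow π (by omega : mB.1 ≤ ν + 1)).trans (hprod i))
      · intro i hi
        rw [hgcoeff]
        exact dvd_sub (hw2LM.coeff_dvd_succ hi) (by rw [hmB]; exact hprod i)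
    exact topRed_by_G0 hG0 pB hBW hvB (some ms) huB _ hgI hgLM
  -- the descending induction
  have key : ∀ k : ℕ, ∀ σ : mo.syn, ∀ u : TateAlgebra n O π,
      ((u * f - w2 : TateAlgebra n O π) ∈ I0) →
      (∀ i, π ^ ms.1 ∣ MvPowerSeries.coeff i (u : MvPowerSeries (Fin n) O)) →
      (∀ i, mo.toSyn ms.2 ≤ mo.toSyn i →
        π ^ (ms.1 + 1) ∣ MvPowerSeries.coeff i (u : MvPowerSeries (Fin n) O)) →
      (∀ m, IsLM π mo (u : MvPowerSeries (Fin n) O) m →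
        (ν + 1 - m.1 < k ∨ (ν + 1 - m.1 = k ∧ mo.toSyn m.2 ≤ σ))) → False := by
    intro k
    induction k with
    | zero =>
      intro σ u hI hAll hAll' hbound
      apply final u hI
      by_cases hu0 : (u : MvPowerSeries (Fin n) O) = 0
      · intro i; rw [hu0, map_zero]; exact dvd_zero _
      · obtain ⟨m, hm⟩ := exists_isLM (mo := mo) hπ u hu0
        have hb := hbound m hm
        have hm1 : ν + 1 ≤ m.1 := by omega
        exact fun i => (pow_dvd_pow π hm1).trans (hm.coeff_dvd i)
    | succ k ihk =>
      intro σ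
      induction σ using WellFounded.induction mo.wf.wf with
      | _ σ ihσ =>
        intro u hI hAll hAll' hbound
        by_cases hu0 : (u : MvPowerSeries (Fin n) O) = 0
        · exact final u hI (fun i => by rw [hu0, map_zero]; exact dvd_zero _)
        obtain ⟨m, hm⟩ := exists_isLM (mo := mo) hπ u hu0
        by_cases hmν : ν + 1 ≤ m.1
        · exact final u hI (fun i => (pow_dvd_pow π hmν).trans (hm.coeff_dvd i))
        push_neg at hmν
        have hmlt : termLT mo m ms := lm_lt_of_all hm hAll hAll'
        by_cases hW : ∀ q ∈ G, ¬ TopRed π mo (u, w2) q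
        · -- (u, w2) belongs to W₁, contradicting minimality of the signature ms
          have hmem : (u, w2) ∈ W1Set π mo I0 f G ν := by
            refine ⟨⟨hI, ?_, hW⟩, mB, hw2LM, hmB⟩
            intro h0
            exact hw2LM.1.ne_zero (by rw [show w2 = (0 : TateAlgebra n O π)
              from congrArg Prod.snd h0]; rfl)
          rcases hminB (u, w2) hmem (some m) hm with he | hlt'
          · rw [Option.some.injEq] at he
            exact termLT_irrefl m (he ▸ hmlt)
          · exact termLT_asymm hmlt hlt'
        · push_neg at hW
          obtain ⟨q, hqG, hTR⟩ := hW
          rcases hTR with ⟨hq20, mu', mq, hLMu, hLMq1, hdvd⟩ |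
            ⟨hne1, hq2ne, m1', mq', hLMw2', hLMq2, hdvd', s1, s2, hs1, hs2, hle⟩
          · -- reduction of the u-part by an element of G with zero v-part
            have hmu : mu' = m := isLM_unique hLMu hm
            rw [hmu] at hdvd
            have hq1f : (q.1 * f : TateAlgebra n O π) ∈ I0 := by
              have hq' : q.1 * f - q.2 ∈ I0 := hGM hqG
              rwa [hq20, sub_zero] at hq'
            obtain ⟨a1, ha1eq, ha1nd⟩ := exact_decomp hm.1.1 hm.1.2
            obtain ⟨b1, hb1eq, hb1nd⟩ := exact_decomp hLMq1.1.1 hLMq1.1.2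
            have hb1u : IsUnit b1 := isUnit_of_not_dvd hπ hb1nd
            set c2 : O := a1 * ↑hb1u.unit⁻¹ with hc2
            have hc2b : c2 * b1 = a1 := by rw [hc2, mul_assoc, IsUnit.val_inv_mul, mul_one]
            set d : Fin n →₀ ℕ := m.2 - mq.2 with hd
            set e : ℕ := m.1 - mq.1 with he
            have hed : e + mq.1 = m.1 := by
              have := hdvd.1; omega
            have hdm : d + mq.2 = m.2 := by
              rw [hd, tsub_add_cancel_of_le hdvd.2]
            set t : TateAlgebra n O π :=
              ⟨MvPowerSeries.monomial d (c2 * π ^ e), monomial_mem d (c2 * π ^ e)⟩ with ht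
            set u' : TateAlgebra n O π := u - t * q.1 with hu'
            have hu'coeff : ∀ i, MvPowerSeries.coeff i (u' : MvPowerSeries (Fin n) O)
                = MvPowerSeries.coeff i (u : MvPowerSeries (Fin n) O)
                  - (if d ≤ i then (c2 * π ^ e) *
                      MvPowerSeries.coeff (i - d) (q.1 : MvPowerSeries (Fin n) O) else 0) := by
              intro i
              rw [show (u' : MvPowerSeries (Fin n) O) = (u : MvPowerSeries (Fin n) O)
                - (MvPowerSeries.monomial d (c2 * π ^ e)) * (q.1 : MvPowerSeries (Fin n) O)
                from rfl, map_sub, MvPowerSeries.coeff_monomial_mul]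
            have hI' : (u' * f - w2 : TateAlgebra n O π) ∈ I0 := by
              have h0 : u' * f - w2 = (u * f - w2) - t * (q.1 * f) := by rw [hu']; ring
              rw [h0]
              exact I0.sub_mem hI (I0.mul_mem_left _ hq1f)
            have hAm : ∀ i, π ^ m.1 ∣ MvPowerSeries.coeff i (u' : MvPowerSeries (Fin n) O) := by
              intro i
              rw [hu'coeff]
              refine dvd_sub (hm.coeff_dvd i) ?_
              by_cases hdi : d ≤ i
              · rw [if_pos hdi]
                obtain ⟨y, hy⟩ := hLMq1.coeff_dvd (i - d)
                rw [hy]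
                exact ⟨c2 * y, by rw [← hed, pow_add]; ring⟩
              · rw [if_neg hdi]; exact dvd_zero _
            have hBm : ∀ i, mo.toSyn m.2 ≤ mo.toSyn i →
                π ^ (m.1 + 1) ∣ MvPowerSeries.coeff i (u' : MvPowerSeries (Fin n) O) := by
              intro i hi
              rcases eq_or_lt_of_le hi with he2 | hlt2
              · obtain rfl : m.2 = i := mo.toSyn.injective he2
                rw [hu'coeff]
                have hdi : d ≤ m.2 := hdm ▸ le_self_add
                rw [if_pos hdi]
                have hmd : m.2 - d = mq.2 := by rw [← hdm, add_tsub_cancel_left]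
                rw [hmd, ha1eq, hb1eq]
                have h0 : π ^ m.1 * a1 - c2 * π ^ e * (π ^ mq.1 * b1) = 0 := by
                  rw [← hc2b, ← hed, pow_add]; ring
                rw [h0]
                exact dvd_zero _
              · rw [hu'coeff]
                refine dvd_sub (hm.coeff_dvd_succ hlt2) ?_
                by_cases hdi : d ≤ i
                · rw [if_pos hdi]
                  have hji : d + (i - d) = i := add_tsub_cancel_of_le hdi
                  have hlt3 : mo.toSyn mq.2 < mo.toSyn (i - d) := by
                    have h1 : mo.toSyn d + mo.toSyn mq.2 < mo.toSyn d + mo.toSyn (i - d) := by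
                      rw [← map_add, ← map_add, hdm, hji]
                      exact hlt2
                    exact lt_of_add_lt_add_left h1
                  obtain ⟨y, hy⟩ := hLMq1.coeff_dvd_succ hlt3
                  rw [hy]
                  refine ⟨c2 * y, ?_⟩
                  have h2 : e + (mq.1 + 1) = m.1 + 1 := by omega
                  rw [← h2, pow_add]; ring
                · rw [if_neg hdi]; exact dvd_zero _
            by_cases hu'0 : (u' : MvPowerSeries (Fin n) O) = 0
            · exact final u' hI' (fun i => by rw [hu'0, map_zero]; exact dvd_zero _)
            obtain ⟨m', hm'⟩ := exists_isLM (mo := mo) hπ u' hu'0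
            have hm'm : termLT mo m' m := lm_lt_of_all hm' hAm hBm
            have hAllpair := all_lt_mono hmlt hAm hBm
            rcases hm'm with hlt1 | ⟨heq1, hlt1⟩
            · -- the valuation strictly increased: use the outer induction hypothesis
              apply ihk (mo.toSyn m'.2) u' hI' hAllpair.1 hAllpair.2
              intro m'' hm''
              obtain rfl : m'' = m' := isLM_unique hm'' hm'
              have hb := hbound m hm
              have hbk : ν + 1 - m.1 ≤ k + 1 := by rcases hb with h | ⟨h, -⟩ <;> omega
              have h2 : ν + 1 - m''.1 ≤ k := by omega
              rcases lt_or_eq_of_le h2 with h3 | h3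
              · exact Or.inl h3
              · exact Or.inr ⟨h3, le_refl _⟩
            · -- same valuation, strictly smaller monomial
              rcases hbound m hm with h | ⟨hk1, hσ⟩
              · apply ihk (mo.toSyn m'.2) u' hI' hAllpair.1 hAllpair.2
                intro m'' hm''
                obtain rfl : m'' = m' := isLM_unique hm'' hm'
                have h2 : ν + 1 - m''.1 ≤ k := by omega
                rcases lt_or_eq_of_le h2 with h3 | h3
                · exact Or.inl h3
                · exact Or.inr ⟨h3, le_refl _⟩
              · apply ihσ (mo.toSyn m'.2) (lt_of_lt_of_le hlt1 hσ) u' hI' hAllpair.1 hAllpair.2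
                intro m'' hm''
                obtain rfl : m'' = m' := isLM_unique hm'' hm'
                exact Or.inr ⟨by omega, le_refl _⟩
          · -- reduction of the v-part: transfer the reduction to pB, a contradiction
            have hm1'eq : m1' = mB := isLM_unique hLMw2' hw2LM
            have hs1eq : s1 = some m := by
              cases s1 with
              | none => exact absurd hs1 hu0
              | some mm => rw [isLM_unique hs1 hm]
            rw [hs1eq] at hle
            apply hBW.2.2 q hqG
            refine Or.inr ⟨coe_ta_ne_zero hvB, hq2ne, mB, mq', hvB, hLMq2,
              hm1'eq ▸ hdvd', some ms, s2, huB, hs2, ?_⟩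
            rw [hm1'eq] at hle
            exact optLE_step hle hmlt
  exact key (ν + 2) 0 w hwI hAllA hAllB (fun m _ => Or.inl (by omega))

end Aux3
/-- any two elements `(u₁,v₁), (u₂,v₂)` of `W₂` satisfy
`LM(v₁) = LM(v₂)`. -/
theorem statement_11 (π : O) (hπ : Irreducible π) (mo : MonomialOrder (Fin n))
    (I0 : Ideal (TateAlgebra n O π)) (f : TateAlgebra n O π)
    (G : Set (TateAlgebra n O π × TateAlgebra n O π))
    (hfin : G.Finite) (hGM : G ⊆ SigMod I0 f)
    (h1f : ((1 : TateAlgebra n O π), f) ∈ G)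
    (hG0 : IsGB π mo {g : TateAlgebra n O π | ((0 : TateAlgebra n O π), g) ∈ G} I0)
    (ν : ℕ)
    (hν₁ : ∃ p ∈ WSet π mo I0 f G, ValEq π (p.2 : MvPowerSeries (Fin n) O) ν)
    (hν₂ : ∀ p ∈ WSet π mo I0 f G, ∀ ν',
      ValEq π (p.2 : MvPowerSeries (Fin n) O) ν' → ν ≤ ν') :
    ∀ p1 ∈ W2Set π mo I0 f G ν, ∀ p2 ∈ W2Set π mo I0 f G ν, ∀ m1 m2,
      IsLM π mo (p1.2 : MvPowerSeries (Fin n) O) m1 →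
      IsLM π mo (p2.2 : MvPowerSeries (Fin n) O) m2 → m1 = m2 := by
  intro p1 hp1 p2 hp2 m1 m2 hm1 hm2
  obtain ⟨⟨⟨hSig1, hne1, hnored1⟩, mv1, hmv1, hmv1ν⟩, s1, hs1, hmin1⟩ := hp1
  obtain ⟨⟨⟨hSig2, hne2, hnored2⟩, mv2, hmv2, hmv2ν⟩, s2, hs2, hmin2⟩ := hp2
  obtain rfl : m1 = mv1 := isLM_unique hm1 hmv1
  obtain rfl : m2 = mv2 := isLM_unique hm2 hmv2
  have h1ne : (p1.1 : MvPowerSeries (Fin n) O) ≠ 0 := by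
    intro h0
    have hz : p1.1 = (0 : TateAlgebra n O π) := Subtype.ext h0
    have hI : p1.2 ∈ I0 := by
      have h2 : p1.2 = -(p1.1 * f - p1.2) := by rw [hz]; ring
      rw [h2]
      exact I0.neg_mem hSig1
    exact topRed_by_G0 hG0 p1 ⟨hSig1, hne1, hnored1⟩ hm1 none h0 p1.2 hI hm1
  have h2ne : (p2.1 : MvPowerSeries (Fin n) O) ≠ 0 := by
    intro h0
    have hz : p2.1 = (0 : TateAlgebra n O π) := Subtype.ext h0
    have hI : p2.2 ∈ I0 := by
      have h2 : p2.2 = -(p2.1 * f - p2.2) := by rw [hz]; ring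
      rw [h2]
      exact I0.neg_mem hSig2
    exact topRed_by_G0 hG0 p2 ⟨hSig2, hne2, hnored2⟩ hm2 none h0 p2.2 hI hm2
  obtain ⟨ms1, rfl⟩ : ∃ ms1, s1 = some ms1 := by
    cases s1 with
    | none => exact absurd hs1 h1ne
    | some mm => exact ⟨mm, rfl⟩
  obtain ⟨ms2, rfl⟩ : ∃ ms2, s2 = some ms2 := by
    cases s2 with
    | none => exact absurd hs2 h2ne
    | some mm => exact ⟨mm, rfl⟩
  have hLMu1 : IsLM π mo (p1.1 : MvPowerSeries (Fin n) O) ms1 := hs1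
  have hW11 : p1 ∈ W1Set π mo I0 f G ν := ⟨⟨hSig1, hne1, hnored1⟩, m1, hm1, hmv1ν⟩
  have hW12 : p2 ∈ W1Set π mo I0 f G ν := ⟨⟨hSig2, hne2, hnored2⟩, m2, hm2, hmv2ν⟩
  have h12 := hmin1 p2 hW12 (some ms2) hs2
  have h21 := hmin2 p1 hW11 (some ms1) hs1
  obtain rfl : ms1 = ms2 := Option.some.inj (optLE_antisymm h12 h21)
  have hLMu2 : IsLM π mo (p2.1 : MvPowerSeries (Fin n) O) ms1 := hs2
  rcases lt_trichotomy (mo.toSyn m1.2) (mo.toSyn m2.2) with hlt | heq | hlt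
  · exact (aux_main π hπ mo I0 f G hGM hG0 ν p1 p2 hSig1
      ⟨hW12, some ms1, hs2, hmin2⟩ ms1 m1 m2 hLMu1 hLMu2 hm1 hm2 hmv1ν hmv2ν hlt).elim
  · exact Prod.ext (hmv1ν.trans hmv2ν.symm) (mo.toSyn.injective heq)
  · exact (aux_main π hπ mo I0 f G hGM hG0 ν p2 p1 hSig2
      ⟨hW11, some ms1, hs1, hmin1⟩ ms1 m2 m1 hLMu2 hLMu1 hm2 hm1 hmv2ν hmv1ν hlt).elim
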